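/- Let u, L, p, q be rational functions in ℂ(z) with p ≠ 0, let ζ ∈ ℂ, and consider the 2×2 matrices A = [[u, L],[0, −u]] and U = [[1, q],[0, 1]]·[[p, 0],[0, p⁻¹]] over ℂ(z). Then the gauge-transformation equation U·A·U⁻¹ − U′·U⁻¹ = [[ζ, 0],[0, −ζ]] holds if and only if u = ζ + p′/p and q′ + 2ζ·q = p²·L. -/

import Mathlib

open Matrix

/-- The Z-twisted gauge equation for the Miura SL(2)-oper connection
`∂_z + [[u,L],[0,-u]]` under `U = [[1,q],[0,1]]·[[p,0],[0,p⁻¹]]` holds iff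
`u = ζ + p′/p` and `q′ + 2ζq = p²·L`. -/
theorem sl2_ztwisted_gauge_iff
    (D : Derivation ℂ (RatFunc ℂ) (RatFunc ℂ))
    (hD : ∀ f : Polynomial ℂ,
      D (algebraMap (Polynomial ℂ) (RatFunc ℂ) f)
        = algebraMap (Polynomial ℂ) (RatFunc ℂ) (Polynomial.derivative f))
    (u L p q : RatFunc ℂ) (hp : p ≠ 0) (ζ : ℂ) :
    letI A : Matrix (Fin 2) (Fin 2) (RatFunc ℂ) := !![u, L; 0, -u]
    letI U : Matrix (Fin 2) (Fin 2) (RatFunc ℂ) :=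
      !![1, q; 0, 1] * !![p, 0; 0, p⁻¹]
    (U * A * U⁻¹ - U.map (⇑D) * U⁻¹ = !![RatFunc.C ζ, 0; 0, -RatFunc.C ζ])
      ↔ (u = RatFunc.C ζ + D p / p
          ∧ D q + RatFunc.C (2 * ζ) * q = p ^ 2 * L) := by
  have hU : (!![1, q; 0, 1] * !![p, 0; 0, p⁻¹] : Matrix (Fin 2) (Fin 2) (RatFunc ℂ))
      = !![p, q * p⁻¹; 0, p⁻¹] := by
    rw [Matrix.mul_fin_two]; congr 1 <;> ring
  have hVU : (!![p, q * p⁻¹; 0, p⁻¹] : Matrix (Fin 2) (Fin 2) (RatFunc ℂ))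
      * !![p⁻¹, -(p⁻¹ * q); 0, p] = 1 := by
    rw [Matrix.mul_fin_two]
    have : p * p⁻¹ = 1 := mul_inv_cancel₀ hp
    have h2 : p⁻¹ * p = 1 := inv_mul_cancel₀ hp
    rw [Matrix.one_fin_two]
    congr 1 <;> field_simp <;> simp [hp]
  have hUinv : (!![p, q * p⁻¹; 0, p⁻¹] : Matrix (Fin 2) (Fin 2) (RatFunc ℂ))⁻¹
      = !![p⁻¹, -(p⁻¹ * q); 0, p] := inv_eq_right_inv hVU
  have hmap : (!![p, q * p⁻¹; 0, p⁻¹] : Matrix (Fin 2) (Fin 2) (RatFunc ℂ)).map ⇑D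
      = !![D p, D q * p⁻¹ + q * (-(p⁻¹^2) * D p); 0, -(p⁻¹^2) * D p] := by
    ext i j
    fin_cases i <;> fin_cases j <;>
      simp [Derivation.leibniz, Derivation.leibniz_inv, smul_eq_mul] <;> ring
  show (_ = _) ↔ _
  rw [hU, hUinv, hmap]
  rw [Matrix.mul_fin_two, Matrix.mul_fin_two, Matrix.mul_fin_two]
  rw [show (!![RatFunc.C ζ, 0; 0, -RatFunc.C ζ] : Matrix (Fin 2) (Fin 2) (RatFunc ℂ))
    = !![RatFunc.C ζ, 0; 0, -(RatFunc.C ζ)] from rfl]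
  rw [← Matrix.ext_iff]
  simp only [Fin.forall_fin_two, Matrix.sub_apply, Matrix.cons_val', Matrix.cons_val_zero,
    Matrix.cons_val_one, Matrix.head_cons, Matrix.empty_val', Matrix.cons_val_fin_one,
    Matrix.head_fin_const, Matrix.of_apply]
  rw [div_eq_mul_inv, (map_mul RatFunc.C 2 ζ).trans (by rw [map_ofNat])]
  have ht : p * p⁻¹ = 1 := mul_inv_cancel₀ hp
  constructor
  · rintro ⟨⟨h1, h2⟩, -, -⟩
    have hu : u = RatFunc.C ζ + D p * p⁻¹ := by
      linear_combination h1 - u * ht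
    refine ⟨hu, ?_⟩
    linear_combination (-1 : RatFunc ℂ) * h2 - (2 * p * p⁻¹ * q) * hu
      - (D q + 2 * RatFunc.C ζ * q + D p * p⁻¹ * q) * ht
  · rintro ⟨hu, hq⟩
    subst hu
    refine ⟨⟨?_, ?_⟩, by ring, ?_⟩
    · linear_combination (RatFunc.C ζ + D p * p⁻¹) * ht
    · linear_combination -hq - (D q + 2 * RatFunc.C ζ * q + D p * p⁻¹ * q) * ht
    · linear_combination (-RatFunc.C ζ) * ht
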